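/- Let n ≥ 3 be an integer, k ≥ 3/2 a real number, and H a real number. Define the diagonal n×n matrix A with a_{11} = a_{nn} = ((2k + 2 − n)/(2nk − 3n + 6))·H, a_{ii} = ((2k − 1)/(2nk − 3n + 6))·H for 2 ≤ i ≤ n−1, and a_{ij} = 0 for i ≠ j. Then tr(A) = H and equality holds in the matrix inequality: k·|A|² − a_{11}a_{nn} − Σ_{i=1}^{n} a_{1i}² − Σ_{i=2}^{n} a_{in}² + H·(a_{11} + a_{nn}) = ((2k² + k − n + 2)/(2nk − 3n + 6))·H². -/

import Mathlib

open Finset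

/-- the explicit diagonal matrix achieving equality in the matrix inequality. -/
theorem matrix_ineq_equality_case (n : ℕ) (hn : 3 ≤ n) (k : ℝ) (hk : 3 / 2 ≤ k) (H : ℝ)
    (A : Matrix (Fin n) (Fin n) ℝ)
    (hA : ∀ i j : Fin n, A i j =
      if i = j then
        (if i = (⟨0, by omega⟩ : Fin n) ∨ i = (⟨n - 1, by omega⟩ : Fin n) then
          ((2 * k + 2 - n) / (2 * n * k - 3 * n + 6)) * H
        else
          ((2 * k - 1) / (2 * n * k - 3 * n + 6)) * H)
      else 0) :
    (∑ i, A i i) = H ∧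
    k * (∑ i, ∑ j, (A i j) ^ 2)
      - A ⟨0, by omega⟩ ⟨0, by omega⟩ * A ⟨n - 1, by omega⟩ ⟨n - 1, by omega⟩
      - (∑ i, (A ⟨0, by omega⟩ i) ^ 2)
      - (∑ i ∈ Finset.univ.erase ⟨0, by omega⟩, (A i ⟨n - 1, by omega⟩) ^ 2)
      + H * (A ⟨0, by omega⟩ ⟨0, by omega⟩ + A ⟨n - 1, by omega⟩ ⟨n - 1, by omega⟩)
    = ((2 * k ^ 2 + k - n + 2) / (2 * n * k - 3 * n + 6)) * H ^ 2 := by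
  have hn0 : 0 < n := by omega
  set i0 : Fin n := ⟨0, by omega⟩ with hi0
  set il : Fin n := ⟨n - 1, by omega⟩ with hil
  have hne : i0 ≠ il := by
    simp only [hi0, hil, ne_eq, Fin.mk.injEq]
    omega
  have hne' : il ≠ i0 := Ne.symm hne
  have hD : (2 * (n : ℝ) * k - 3 * n + 6) ≠ 0 := by
    have h3 : (3 : ℝ) ≤ (n : ℝ) := by exact_mod_cast hn
    nlinarith
  set a : ℝ := ((2 * k + 2 - n) / (2 * n * k - 3 * n + 6)) * H with ha
  set b : ℝ := ((2 * k - 1) / (2 * n * k - 3 * n + 6)) * H with hb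
  have hdiag : ∀ i : Fin n, A i i = b + (if i = i0 then a - b else 0) + (if i = il then a - b else 0) := by
    intro i
    rw [hA i i]
    by_cases h1 : i = i0 <;> by_cases h2 : i = il <;>
      simp [h1, h2, hne, hne'] <;> ring
  have hdiag2 : ∀ i : Fin n, (A i i) ^ 2 = b ^ 2 + (if i = i0 then a ^ 2 - b ^ 2 else 0) + (if i = il then a ^ 2 - b ^ 2 else 0) := by
    intro i
    rw [hA i i]
    by_cases h1 : i = i0 <;> by_cases h2 : i = il <;>
      simp [h1, h2, hne, hne'] <;> ring
  have hoff : ∀ i j : Fin n, i ≠ j → (A i j) ^ 2 = 0 := by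
    intro i j h
    rw [hA i j, if_neg h]
    ring
  have htr : (∑ i, A i i) = (n : ℝ) * b + (a - b) + (a - b) := by
    simp only [hdiag]
    rw [Finset.sum_add_distrib, Finset.sum_add_distrib, Finset.sum_const,
      Finset.sum_ite_eq' univ i0, Finset.sum_ite_eq' univ il,
      if_pos (Finset.mem_univ i0), if_pos (Finset.mem_univ il)]
    simp [mul_comm]
  have hsq : (∑ i, ∑ j, (A i j) ^ 2) = (n : ℝ) * b ^ 2 + (a ^ 2 - b ^ 2) + (a ^ 2 - b ^ 2) := by
    have hthis : ∀ i : Fin n, (∑ j, (A i j) ^ 2) = (A i i) ^ 2 := fun i =>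
      Fintype.sum_eq_single i fun j hj => hoff i j (Ne.symm hj)
    rw [Finset.sum_congr rfl fun i _ => hthis i]
    simp only [hdiag2]
    rw [Finset.sum_add_distrib, Finset.sum_add_distrib, Finset.sum_const,
      Finset.sum_ite_eq' univ i0, Finset.sum_ite_eq' univ il,
      if_pos (Finset.mem_univ i0), if_pos (Finset.mem_univ il)]
    simp [mul_comm]
  have h00 : A i0 i0 = a := by rw [hA, if_pos rfl, if_pos (Or.inl rfl)]
  have hll : A il il = a := by rw [hA, if_pos rfl, if_pos (Or.inr rfl)]
  have hrow : (∑ i, (A i0 i) ^ 2) = a ^ 2 := by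
    rw [Fintype.sum_eq_single i0 fun j hj => hoff i0 j (Ne.symm hj), h00]
  have hcol : (∑ i ∈ Finset.univ.erase i0, (A i il) ^ 2) = a ^ 2 := by
    rw [Finset.sum_eq_single_of_mem il (Finset.mem_erase.mpr ⟨hne', Finset.mem_univ il⟩)
      (fun j _ hj => hoff j il hj), hll]
  constructor
  · rw [htr, ha, hb]
    field_simp [show (n : ℝ) * (2 * k - 3) + 6 ≠ 0 by contrapose! hD; linarith]
    ring
  · rw [hsq, h00, hll, hrow, hcol, ha, hb]
    field_simp [show (n : ℝ) * (k * 2 - 3) + 6 ≠ 0 by contrapose! hD; linarith]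
    ring
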